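/- For all integers 1 ≤ k < l, the graph XF₅^{2k} is not isomorphic to any induced subgraph of XF₅^{2l}. -/

import Mathlib

universe u

/-- The Seidel complement of `G` at `v`: adjacency between the open neighborhood of `v`
and the set of vertices different from `v` and not adjacent to `v` is complemented,
all other adjacencies are unchanged. -/
def seidelCompl {V : Type u} (G : SimpleGraph V) (v : V) : SimpleGraph V where
  Adj x y := x ≠ y ∧
    Xor' (G.Adj x y)
      ((G.Adj v x ∧ ¬ G.Adj v y ∧ y ≠ v) ∨ (G.Adj v y ∧ ¬ G.Adj v x ∧ x ≠ v))
  symm := by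
    constructor
    rintro x y ⟨hxy, h⟩
    refine ⟨hxy.symm, ?_⟩
    have h1 : G.Adj x y ↔ G.Adj y x := G.adj_comm x y
    unfold Xor' Xor at h ⊢
    tauto
  loopless := ⟨fun x h => h.1 rfl⟩

/-- The graph `XF₅ⁿ`: vertices `A = inl 0`, `B = inl 1`, `C = inl 2`, `D = inl 3` and the
path vertices `p₁, …, p_{n+1}` (`pᵢ = inr (i-1)`). Its edges are exactly: the path edges
`pᵢ p_{i+1}`, the domination edges `C pᵢ` and `D pᵢ` for all `i`, and the edges
`A D`, `A p₁`, `B C`, `B p_{n+1}`. -/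
def XF5 (n : ℕ) : SimpleGraph (Fin 4 ⊕ Fin (n + 1)) :=
  SimpleGraph.fromRel fun x y =>
    match x, y with
    | Sum.inr i, Sum.inr j => (i : ℕ) + 1 = (j : ℕ)
    | Sum.inl a, Sum.inr i =>
        a = 2 ∨ a = 3 ∨ (a = 0 ∧ (i : ℕ) = 0) ∨ (a = 1 ∧ (i : ℕ) = n)
    | Sum.inl a, Sum.inl b => (a = 0 ∧ b = 3) ∨ (a = 1 ∧ b = 2)
    | _, _ => False

open Sum

lemma adj_inl_inr (m : ℕ) (a : Fin 4) (i : Fin (m+1)) :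
    (XF5 m).Adj (inl a) (inr i) ↔ (a = 2 ∨ a = 3 ∨ (a = 0 ∧ (i:ℕ) = 0) ∨ (a = 1 ∧ (i:ℕ) = m)) := by
  simp [XF5, SimpleGraph.fromRel_adj]

lemma adj_inr_inr (m : ℕ) (i j : Fin (m+1)) :
    (XF5 m).Adj (inr i) (inr j) ↔ ((i:ℕ) + 1 = j ∨ (j:ℕ) + 1 = i) := by
  simp only [XF5, SimpleGraph.fromRel_adj]
  constructor
  · rintro ⟨-, h⟩; exact h
  · rintro h
    refine ⟨?_, h⟩
    intro he
    injection he with he'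
    omega

lemma adj_inl_inl (m : ℕ) (a b : Fin 4) :
    (XF5 m).Adj (inl a) (inl b) ↔
      ((a = 0 ∧ b = 3) ∨ (a = 1 ∧ b = 2) ∨ (b = 0 ∧ a = 3) ∨ (b = 1 ∧ a = 2)) := by
  simp only [XF5, SimpleGraph.fromRel_adj]
  constructor
  · rintro ⟨-, h | h⟩ <;> tauto
  · intro h
    constructor
    · simp only [ne_eq, inl.injEq]
      rintro rfl
      rcases h with ⟨rfl, h⟩|⟨rfl,h⟩|⟨rfl,h⟩|⟨rfl,h⟩ <;> exact absurd h (by decide)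
    · tauto

lemma adj_inr_inl (m : ℕ) (a : Fin 4) (i : Fin (m+1)) :
    (XF5 m).Adj (inr i) (inl a) ↔ (a = 2 ∨ a = 3 ∨ (a = 0 ∧ (i:ℕ) = 0) ∨ (a = 1 ∧ (i:ℕ) = m)) := by
  rw [SimpleGraph.adj_comm]; exact adj_inl_inr m a i

lemma common_CD (m : ℕ) (z : Fin 4 ⊕ Fin (m+1)) (h2 : (XF5 m).Adj (inl 2) z)
    (h3 : (XF5 m).Adj (inl 3) z) : ∃ i, z = inr i := by
  cases z with
  | inr i => exact ⟨i, rfl⟩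
  | inl a =>
    rw [adj_inl_inl] at h2 h3
    simp at h2 h3
    exfalso
    rcases h2 with rfl
    simp at h3

lemma only_A (m : ℕ) (z : Fin 4 ⊕ Fin (m+1)) (h3 : (XF5 m).Adj (inl 3) z)
    (h2 : ¬ (XF5 m).Adj (inl 2) z) : z = inl 0 := by
  cases z with
  | inr i => exact absurd ((adj_inl_inr m 2 i).2 (by left; rfl)) h2
  | inl a =>
    rw [adj_inl_inl] at h3 h2
    simp at h3 h2
    rcases h3 with rfl
    rfl

lemma only_B (m : ℕ) (z : Fin 4 ⊕ Fin (m+1)) (h2 : (XF5 m).Adj (inl 2) z)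
    (h3 : ¬ (XF5 m).Adj (inl 3) z) : z = inl 1 := by
  cases z with
  | inr i => exact absurd ((adj_inl_inr m 3 i).2 (by right; left; rfl)) h3
  | inl a =>
    rw [adj_inl_inl] at h2 h3
    simp at h2 h3
    rcases h2 with rfl
    rfl

lemma ne_val_of_inr_ne {m : ℕ} {i j : Fin (m+1)} (h : (inr i : Fin 4 ⊕ Fin (m+1)) ≠ inr j) :
    (i:ℕ) ≠ j := fun hv => h (congrArg inr (Fin.ext hv))

lemma nbr_A (m : ℕ) (z : Fin 4 ⊕ Fin (m+1)) (h : (XF5 m).Adj (inl 0) z) :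
    z = inl 3 ∨ z = inr (0 : Fin (m+1)) := by
  cases z with
  | inl c =>
    rw [adj_inl_inl] at h
    left
    have : c = 3 := by simp only [Fin.ext_iff] at h ⊢; omega
    rw [this]
  | inr t =>
    rw [adj_inl_inr] at h
    right
    have : t = 0 := by
      apply Fin.ext
      simp only [Fin.ext_iff] at h
      simp only [Fin.val_zero]; omega
    rw [this]

lemma nbr_B (m : ℕ) (z : Fin 4 ⊕ Fin (m+1)) (h : (XF5 m).Adj (inl 1) z) :
    z = inl 2 ∨ z = inr (Fin.last m) := by
  cases z with
  | inl c =>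
    rw [adj_inl_inl] at h
    left
    have : c = 2 := by simp only [Fin.ext_iff] at h ⊢; omega
    rw [this]
  | inr t =>
    rw [adj_inl_inr] at h
    right
    have : t = Fin.last m := by
      apply Fin.ext
      simp only [Fin.ext_iff, Fin.val_last] at h ⊢
      omega
    rw [this]

lemma mixed_case (m : ℕ) (a : Fin 4) (i : Fin (m+1)) (u v w : Fin 4 ⊕ Fin (m+1))
    (hxy : ¬ (XF5 m).Adj (inl a) (inr i))
    (huv : u ≠ v) (huw : u ≠ w) (hvw : v ≠ w)
    (hxu : (XF5 m).Adj (inl a) u) (hxv : (XF5 m).Adj (inl a) v)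
    (hxw : (XF5 m).Adj (inl a) w) : False := by
  have ha : a = 0 ∨ a = 1 := by
    rw [adj_inl_inr] at hxy
    push_neg at hxy
    simp only [Fin.ext_iff] at hxy ⊢
    have := a.isLt
    omega
  rcases ha with rfl | rfl
  · rcases nbr_A m u hxu with rfl | rfl <;> rcases nbr_A m v hxv with rfl | rfl <;>
      rcases nbr_A m w hxw with rfl | rfl <;> simp_all
  · rcases nbr_B m u hxu with rfl | rfl <;> rcases nbr_B m v hxv with rfl | rfl <;>
      rcases nbr_B m w hxw with rfl | rfl <;> simp_all

lemma classify (m : ℕ) (x y u v w : Fin 4 ⊕ Fin (m+1))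
    (hxy : ¬ (XF5 m).Adj x y) (hne : x ≠ y)
    (huv : u ≠ v) (huw : u ≠ w) (hvw : v ≠ w)
    (hxu : (XF5 m).Adj x u) (hyu : (XF5 m).Adj y u)
    (hxv : (XF5 m).Adj x v) (hyv : (XF5 m).Adj y v)
    (hxw : (XF5 m).Adj x w) (hyw : (XF5 m).Adj y w) :
    ((x = inl 2 ∧ y = inl 3) ∨ (x = inl 3 ∧ y = inl 2)) ∨
      (∃ i j : Fin (m+1), x = inr i ∧ y = inr j ∧ ((i:ℕ) + 2 = j ∨ (j:ℕ) + 2 = i)) := by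
  rcases x with a | i <;> rcases y with b | j
  · -- both inl
    have hab : a ≠ b := fun h => hne (by rw [h])
    have key : ∀ z : Fin 4 ⊕ Fin (m+1), (XF5 m).Adj (inl a) z → (XF5 m).Adj (inl b) z →
        ∃ t, z = inr t := by
      intro z h1 h2
      cases z with
      | inr t => exact ⟨t, rfl⟩
      | inl c =>
        exfalso
        rw [adj_inl_inl] at h1 h2
        simp only [Fin.ext_iff] at h1 h2
        have : (a:ℕ) ≠ b := fun h => hab (Fin.ext h)
        omega
    obtain ⟨tu, rfl⟩ := key u hxu hyu
    obtain ⟨tv, rfl⟩ := key v hxv hyv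
    obtain ⟨tw, rfl⟩ := key w hxw hyw
    rw [adj_inl_inr] at hxu hyu hxv hyv hxw hyw
    rw [adj_inl_inl] at hxy
    left
    simp only [inl.injEq]
    have h1 := ne_val_of_inr_ne huv
    have h2 := ne_val_of_inr_ne huw
    have h3 := ne_val_of_inr_ne hvw
    have hab' : (a:ℕ) ≠ b := fun h => hab (Fin.ext h)
    push_neg at hxy
    simp only [Fin.ext_iff] at hxu hyu hxv hyv hxw hyw hxy ⊢
    omega
  · exact absurd (mixed_case m a j u v w hxy huv huw hvw hxu hxv hxw) not_false
  · rw [SimpleGraph.adj_comm] at hxy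
    exact absurd (mixed_case m b i u v w hxy huv huw hvw hyu hyv hyw) not_false
  · right
    have hij : (i:ℕ) ≠ j := ne_val_of_inr_ne hne
    have key : ∀ z : Fin 4 ⊕ Fin (m+1), (XF5 m).Adj (inr i) z → (XF5 m).Adj (inr j) z →
        (z = inl 2 ∨ z = inl 3 ∨ ∃ t, z = inr t) := by
      intro z h1 h2
      cases z with
      | inr t => exact Or.inr (Or.inr ⟨t, rfl⟩)
      | inl c =>
        rw [adj_inr_inl] at h1 h2
        have : c = 2 ∨ c = 3 := by
          simp only [Fin.ext_iff] at h1 h2 ⊢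
          omega
        rcases this with rfl | rfl
        · exact Or.inl rfl
        · exact Or.inr (Or.inl rfl)
    have hex : ∃ t : Fin (m+1), (XF5 m).Adj (inr i) (inr t) ∧ (XF5 m).Adj (inr j) (inr t) := by
      rcases key u hxu hyu with rfl | rfl | ⟨t, rfl⟩
      · rcases key v hxv hyv with rfl | rfl | ⟨t, rfl⟩
        · exact absurd rfl huv
        · rcases key w hxw hyw with rfl | rfl | ⟨t, rfl⟩
          · exact absurd rfl huw
          · exact absurd rfl hvw
          · exact ⟨t, hxw, hyw⟩
        · exact ⟨t, hxv, hyv⟩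
      · rcases key v hxv hyv with rfl | rfl | ⟨t, rfl⟩
        · rcases key w hxw hyw with rfl | rfl | ⟨t, rfl⟩
          · exact absurd rfl hvw
          · exact absurd rfl huw
          · exact ⟨t, hxw, hyw⟩
        · exact absurd rfl huv
        · exact ⟨t, hxv, hyv⟩
      · exact ⟨t, hxu, hyu⟩
    obtain ⟨t, h1, h2⟩ := hex
    rw [adj_inr_inr] at h1 h2
    rw [adj_inr_inr] at hxy
    push_neg at hxy
    exact ⟨i, j, rfl, rfl, by omega⟩

lemma common_PP (m : ℕ) (i j : Fin (m+1)) (hij : (i:ℕ) + 2 = j)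
    (z : Fin 4 ⊕ Fin (m+1)) (h1 : (XF5 m).Adj (inr i) z) (h2 : (XF5 m).Adj (inr j) z) :
    z = inl 2 ∨ z = inl 3 ∨ ∃ t : Fin (m+1), z = inr t ∧ (t:ℕ) = (i:ℕ) + 1 := by
  cases z with
  | inl c =>
    rw [adj_inr_inl] at h1 h2
    have hc : c = 2 ∨ c = 3 := by
      simp only [Fin.ext_iff] at h1 h2 ⊢
      have := j.isLt
      omega
    rcases hc with rfl | rfl
    · exact Or.inl rfl
    · exact Or.inr (Or.inl rfl)
  | inr t =>
    rw [adj_inr_inr] at h1 h2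
    exact Or.inr (Or.inr ⟨t, rfl, by omega⟩)

def qv (n t : ℕ) : Fin 4 ⊕ Fin (n+1) := inr ⟨min t n, by omega⟩

lemma src_C_q (n t : ℕ) : (XF5 n).Adj (inl 2) (qv n t) :=
  (adj_inl_inr n 2 _).2 (Or.inl rfl)

lemma src_D_q (n t : ℕ) : (XF5 n).Adj (inl 3) (qv n t) :=
  (adj_inl_inr n 3 _).2 (Or.inr (Or.inl rfl))

lemma src_A_q (n t : ℕ) : (XF5 n).Adj (inl 0) (qv n t) ↔ min t n = 0 := by
  simp [qv, adj_inl_inr]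

lemma src_B_q (n t : ℕ) : (XF5 n).Adj (inl 1) (qv n t) ↔ min t n = n := by
  simp [qv, adj_inl_inr]

lemma src_q_q (n s t : ℕ) : (XF5 n).Adj (qv n s) (qv n t) ↔
    (min s n) + 1 = min t n ∨ (min t n) + 1 = min s n := by
  simp [qv, adj_inr_inr]

lemma src_q_A (n t : ℕ) : (XF5 n).Adj (qv n t) (inl 0) ↔ min t n = 0 := by
  rw [SimpleGraph.adj_comm]; exact src_A_q n t

lemma src_q_B (n t : ℕ) : (XF5 n).Adj (qv n t) (inl 1) ↔ min t n = n := by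
  rw [SimpleGraph.adj_comm]; exact src_B_q n t

lemma srcAD (n : ℕ) : (XF5 n).Adj (inl 0) (inl 3) := (adj_inl_inl n 0 3).2 (by decide)
lemma srcBC (n : ℕ) : (XF5 n).Adj (inl 1) (inl 2) := (adj_inl_inl n 1 2).2 (by decide)

lemma main_aux (n mm : ℕ) (hn2 : 2 ≤ n) (hnm : n < mm) (hm4 : 4 ≤ mm)
    (f : XF5 n ↪g XF5 mm) : False := by
  have finj : ∀ {x y}, f x = f y → x = y := fun h => f.injective h
  have adjf : ∀ {x y}, (XF5 n).Adj x y → (XF5 mm).Adj (f x) (f y) :=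
    fun h => f.map_rel_iff.2 h
  have dq : ∀ s t : ℕ, min s n ≠ min t n → f (qv n s) ≠ f (qv n t) := by
    intro s t hst h
    apply hst
    have := finj h
    simpa [qv] using this
  have hfCD : ¬ (XF5 mm).Adj (f (inl 2)) (f (inl 3)) := by
    rw [f.map_rel_iff, adj_inl_inl]; decide
  have hfCDne : f (inl 2) ≠ f (inl 3) := fun h => by simpa using finj h
  rcases classify mm (f (inl 2)) (f (inl 3)) (f (qv n 0)) (f (qv n 1)) (f (qv n 2))
      hfCD hfCDne (dq 0 1 (by omega)) (dq 0 2 (by omega)) (dq 1 2 (by omega))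
      (adjf (src_C_q n 0)) (adjf (src_D_q n 0))
      (adjf (src_C_q n 1)) (adjf (src_D_q n 1))
      (adjf (src_C_q n 2)) (adjf (src_D_q n 2)) with
    (⟨hC, hD⟩ | ⟨hC, hD⟩) | ⟨i, j, hC, hD, hij⟩
  · -- f C = C, f D = D
    have hA : f (inl 0) = inl 0 := by
      apply only_A mm
      · rw [← hD, f.map_rel_iff]
        exact (adj_inl_inl n 3 0).2 (by decide)
      · rw [← hC, f.map_rel_iff, adj_inl_inl]; decide
    have hB : f (inl 1) = inl 1 := by
      apply only_B mm
      · rw [← hC, f.map_rel_iff]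
        exact (adj_inl_inl n 2 1).2 (by decide)
      · rw [← hD, f.map_rel_iff, adj_inl_inl]; decide
    have hg : ∀ t : ℕ, ∃ s : Fin (mm+1), f (qv n t) = inr s := by
      intro t
      exact common_CD mm _ (by rw [← hC, f.map_rel_iff]; exact src_C_q n t)
        (by rw [← hD, f.map_rel_iff]; exact src_D_q n t)
    choose g hgs using hg
    have h0 : (g 0 : ℕ) = 0 := by
      have := adjf ((src_A_q n 0).2 (by omega))
      rw [hA, hgs 0, adj_inl_inr] at this
      simpa using this
    have hlast : (g n : ℕ) = mm := by
      have := adjf ((src_B_q n n).2 (by omega))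
      rw [hB, hgs n, adj_inl_inr] at this
      simpa using this
    have hstep : ∀ t, t < n → ((g (t+1) : ℕ) = g t + 1 ∨ (g t : ℕ) = g (t+1) + 1) := by
      intro t ht
      have := adjf ((src_q_q n t (t+1)).2 (by omega))
      rw [hgs t, hgs (t+1), adj_inr_inr] at this
      omega
    have hmono : ∀ t, t ≤ n → (g t : ℕ) ≤ t := by
      intro t
      induction t with
      | zero => intro _; omega
      | succ s ih =>
        intro hs
        have h1 := hstep s (by omega)
        have h2 := ih (by omega)
        omega
    have := hmono n le_rfl
    omega
  · -- f C = D, f D = C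
    have hA : f (inl 0) = inl 1 := by
      apply only_B mm
      · rw [← hD, f.map_rel_iff]
        exact (adj_inl_inl n 3 0).2 (by decide)
      · rw [← hC, f.map_rel_iff, adj_inl_inl]; decide
    have hB : f (inl 1) = inl 0 := by
      apply only_A mm
      · rw [← hC, f.map_rel_iff]
        exact (adj_inl_inl n 2 1).2 (by decide)
      · rw [← hD, f.map_rel_iff, adj_inl_inl]; decide
    have hg : ∀ t : ℕ, ∃ s : Fin (mm+1), f (qv n t) = inr s := by
      intro t
      exact common_CD mm _ (by rw [← hD, f.map_rel_iff]; exact src_D_q n t)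
        (by rw [← hC, f.map_rel_iff]; exact src_C_q n t)
    choose g hgs using hg
    have h0 : (g 0 : ℕ) = mm := by
      have := adjf ((src_A_q n 0).2 (by omega))
      rw [hA, hgs 0, adj_inl_inr] at this
      simpa using this
    have hlast : (g n : ℕ) = 0 := by
      have := adjf ((src_B_q n n).2 (by omega))
      rw [hB, hgs n, adj_inl_inr] at this
      simpa using this
    have hstep : ∀ t, t < n → ((g (t+1) : ℕ) = g t + 1 ∨ (g t : ℕ) = g (t+1) + 1) := by
      intro t ht
      have := adjf ((src_q_q n t (t+1)).2 (by omega))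
      rw [hgs t, hgs (t+1), adj_inr_inr] at this
      omega
    have hmono : ∀ t, t ≤ n → mm ≤ (g t : ℕ) + t := by
      intro t
      induction t with
      | zero => intro _; omega
      | succ s ih =>
        intro hs
        have h1 := hstep s (by omega)
        have h2 := ih (by omega)
        omega
    have := hmono n le_rfl
    omega
  · -- f C, f D are path vertices
    rcases hij with hij | hij
    · have hlt : (i:ℕ) + 1 < mm + 1 := by have := j.isLt; omega
      have hmem : ∀ t : ℕ, f (qv n t) = inl 2 ∨ f (qv n t) = inl 3 ∨
          f (qv n t) = inr ⟨(i:ℕ)+1, hlt⟩ := by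
        intro t
        rcases common_PP mm i j hij _ (by rw [← hC, f.map_rel_iff]; exact src_C_q n t)
          (by rw [← hD, f.map_rel_iff]; exact src_D_q n t) with h | h | ⟨s, hz, hs⟩
        · exact Or.inl h
        · exact Or.inr (Or.inl h)
        · refine Or.inr (Or.inr ?_)
          rw [hz]
          congr 1
          exact Fin.ext (by simp [hs])
      rcases Nat.lt_or_ge n 3 with hn3 | hn3
      · have hn : n = 2 := by omega
        subst hn
        have h01 : (XF5 mm).Adj (f (qv 2 0)) (f (qv 2 1)) := adjf ((src_q_q 2 0 1).2 (by omega))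
        have h12 : (XF5 mm).Adj (f (qv 2 1)) (f (qv 2 2)) := adjf ((src_q_q 2 1 2).2 (by omega))
        have h02 : ¬ (XF5 mm).Adj (f (qv 2 0)) (f (qv 2 2)) := by
          rw [f.map_rel_iff, src_q_q]; omega
        have d01 := dq 0 1 (by omega)
        have d02 := dq 0 2 (by omega)
        have d12 := dq 1 2 (by omega)
        have hstruct : (f (qv 2 0) = inl 2 ∧ f (qv 2 2) = inl 3) ∨
            (f (qv 2 0) = inl 3 ∧ f (qv 2 2) = inl 2) := by
          clear adjf dq hfCD hfCDne finj hC hD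
          rcases hmem 0 with h0 | h0 | h0 <;> rcases hmem 1 with h1 | h1 | h1 <;>
            rcases hmem 2 with h2 | h2 | h2 <;>
              simp_all [adj_inl_inl, adj_inl_inr, adj_inr_inl, adj_inr_inr]
        rcases hstruct with ⟨hs0, hs2⟩ | ⟨hs0, hs2⟩
        · have hA : f (inl 0) = inl 1 := by
            apply only_B mm
            · rw [← hs0, f.map_rel_iff, src_q_A]; omega
            · rw [← hs2, f.map_rel_iff, src_q_A]; omega
          have hj : (j:ℕ) = mm := by
            have := adjf (srcAD 2)
            rw [hA, hD, adj_inl_inr] at this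
            simpa using this
          have hB : f (inl 1) = inl 0 := by
            apply only_A mm
            · rw [← hs2, f.map_rel_iff, src_q_B]; omega
            · rw [← hs0, f.map_rel_iff, src_q_B]; omega
          have hi : (i:ℕ) = 0 := by
            have := adjf (srcBC 2)
            rw [hB, hC, adj_inl_inr] at this
            simpa using this
          omega
        · have hA : f (inl 0) = inl 0 := by
            apply only_A mm
            · rw [← hs0, f.map_rel_iff, src_q_A]; omega
            · rw [← hs2, f.map_rel_iff, src_q_A]; omega
          have hj : (j:ℕ) = 0 := by
            have := adjf (srcAD 2)
            rw [hA, hD, adj_inl_inr] at this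
            simpa using this
          omega
      · have d01 := dq 0 1 (by omega)
        have d02 := dq 0 2 (by omega)
        have d03 := dq 0 3 (by omega)
        have d12 := dq 1 2 (by omega)
        have d13 := dq 1 3 (by omega)
        have d23 := dq 2 3 (by omega)
        clear adjf dq hfCD hfCDne finj hC hD
        rcases hmem 0 with h0 | h0 | h0 <;> rcases hmem 1 with h1 | h1 | h1 <;>
          rcases hmem 2 with h2 | h2 | h2 <;> rcases hmem 3 with h3 | h3 | h3 <;>
            simp_all
    · have hlt : (j:ℕ) + 1 < mm + 1 := by have := i.isLt; omega
      have hmem : ∀ t : ℕ, f (qv n t) = inl 2 ∨ f (qv n t) = inl 3 ∨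
          f (qv n t) = inr ⟨(j:ℕ)+1, hlt⟩ := by
        intro t
        rcases common_PP mm j i hij _ (by rw [← hD, f.map_rel_iff]; exact src_D_q n t)
          (by rw [← hC, f.map_rel_iff]; exact src_C_q n t) with h | h | ⟨s, hz, hs⟩
        · exact Or.inl h
        · exact Or.inr (Or.inl h)
        · refine Or.inr (Or.inr ?_)
          rw [hz]
          congr 1
          exact Fin.ext (by simp [hs])
      rcases Nat.lt_or_ge n 3 with hn3 | hn3
      · have hn : n = 2 := by omega
        subst hn
        have h01 : (XF5 mm).Adj (f (qv 2 0)) (f (qv 2 1)) := adjf ((src_q_q 2 0 1).2 (by omega))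
        have h12 : (XF5 mm).Adj (f (qv 2 1)) (f (qv 2 2)) := adjf ((src_q_q 2 1 2).2 (by omega))
        have h02 : ¬ (XF5 mm).Adj (f (qv 2 0)) (f (qv 2 2)) := by
          rw [f.map_rel_iff, src_q_q]; omega
        have d01 := dq 0 1 (by omega)
        have d02 := dq 0 2 (by omega)
        have d12 := dq 1 2 (by omega)
        have hstruct : (f (qv 2 0) = inl 2 ∧ f (qv 2 2) = inl 3) ∨
            (f (qv 2 0) = inl 3 ∧ f (qv 2 2) = inl 2) := by
          clear adjf dq hfCD hfCDne finj hC hD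
          rcases hmem 0 with h0 | h0 | h0 <;> rcases hmem 1 with h1 | h1 | h1 <;>
            rcases hmem 2 with h2 | h2 | h2 <;>
              simp_all [adj_inl_inl, adj_inl_inr, adj_inr_inl, adj_inr_inr]
        rcases hstruct with ⟨hs0, hs2⟩ | ⟨hs0, hs2⟩
        · have hA : f (inl 0) = inl 1 := by
            apply only_B mm
            · rw [← hs0, f.map_rel_iff, src_q_A]; omega
            · rw [← hs2, f.map_rel_iff, src_q_A]; omega
          have hj : (j:ℕ) = mm := by
            have := adjf (srcAD 2)
            rw [hA, hD, adj_inl_inr] at this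
            simpa using this
          have := i.isLt
          omega
        · have hA : f (inl 0) = inl 0 := by
            apply only_A mm
            · rw [← hs0, f.map_rel_iff, src_q_A]; omega
            · rw [← hs2, f.map_rel_iff, src_q_A]; omega
          have hj : (j:ℕ) = 0 := by
            have := adjf (srcAD 2)
            rw [hA, hD, adj_inl_inr] at this
            simpa using this
          have hB : f (inl 1) = inl 1 := by
            apply only_B mm
            · rw [← hs2, f.map_rel_iff, src_q_B]; omega
            · rw [← hs0, f.map_rel_iff, src_q_B]; omega
          have hi : (i:ℕ) = mm := by
            have := adjf (srcBC 2)
            rw [hB, hC, adj_inl_inr] at this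
            simpa using this
          omega
      · have d01 := dq 0 1 (by omega)
        have d02 := dq 0 2 (by omega)
        have d03 := dq 0 3 (by omega)
        have d12 := dq 1 2 (by omega)
        have d13 := dq 1 3 (by omega)
        have d23 := dq 2 3 (by omega)
        clear adjf dq hfCD hfCDne finj hC hD
        rcases hmem 0 with h0 | h0 | h0 <;> rcases hmem 1 with h1 | h1 | h1 <;>
          rcases hmem 2 with h2 | h2 | h2 <;> rcases hmem 3 with h3 | h3 | h3 <;>
            simp_all

/-- For `1 ≤ k < l`, `XF₅^{2k}` is not isomorphic to any induced subgraph of `XF₅^{2l}`. -/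
theorem xf5_no_induced_embedding (k l : ℕ) (hk : 1 ≤ k) (hkl : k < l) :
    IsEmpty (XF5 (2 * k) ↪g XF5 (2 * l)) :=
  ⟨fun f => main_aux (2 * k) (2 * l) (by omega) (by omega) (by omega) f⟩
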